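/- Let $\phi_t$ be a continuous flow on a compact metric space $M$. Suppose there exist $\epsilon,\delta > 0$ such that for every $x \in M$ there is $t_0 \in \mathbb{R}$ with $B^+(x,\delta) \subset \phi_{[t_0-\epsilon,\,t_0+\epsilon]}(x)$, where $B^+(x,\delta) = \{y : d(\phi_u x, \phi_u y) \le \delta \text{ for all } u \ge 0\}$. Then for every $x$, the topological entropy of the time-one map $f = \phi_1$ over the set $B^+(x,\delta)$ is zero, i.e. $h(f, B^+(x,\delta)) = 0$; hence the flow is entropy-expansive with constant $\delta$. -/
import Mathlib


open Filter

theorem stmt11 {M : Type*} [MetricSpace M] [CompactSpace M]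
    (φ : ℝ → M → M) (hcont : Continuous fun p : ℝ × M => φ p.1 p.2)
    (hφ0 : ∀ x, φ 0 x = x) (hφadd : ∀ s t x, φ (s+t) x = φ s (φ t x))
    (f : M → M) (hf : f = φ 1)
    (Bplus : M → ℝ → Set M)
    (hB : ∀ x δ, Bplus x δ = {y | ∀ u : ℝ, 0 ≤ u → dist (φ u x) (φ u y) ≤ δ})
    (ε δ : ℝ) (hε : 0 < ε) (hδ : 0 < δ)
    (hexp : ∀ x : M, ∃ t₀ : ℝ, Bplus x δ ⊆ (fun t => φ t x) '' Set.Icc (t₀-ε) (t₀+ε))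
    (r : M → ℕ → ℝ → ℕ)
    (hr : ∀ x n η, r x n η = sInf {m : ℕ | ∃ F : Finset M, F.card = m ∧
      ∀ y ∈ Bplus x δ, ∃ z ∈ F, ∀ i : ℕ, i < n → dist (f^[i] y) (f^[i] z) < η}) :
    ∀ x : M, ∀ η : ℝ, 0 < η →
      Filter.limsup (fun n : ℕ => Real.log (r x n η) / (n:ℝ)) atTop ≤ 0 := by
  classical
  intro x η hη
  obtain ⟨t₀, ht₀⟩ := hexp x
  set I : Set ℝ := Set.Icc (t₀ - ε) (t₀ + ε) with hI
  -- iterates of f are flow times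
  have hiter : ∀ (i : ℕ) (w : M), f^[i] w = φ i w := by
    intro i
    induction i with
    | zero => intro w; simp [hφ0]
    | succ i ih =>
      intro w
      rw [Function.iterate_succ_apply', ih, hf]
      rw [← hφadd]
      rw [add_comm]
      norm_num
  -- uniform continuity on I × univ
  have hcompI : IsCompact I := isCompact_Icc
  have huc : UniformContinuousOn (fun p : ℝ × M => φ p.1 p.2) (I ×ˢ Set.univ) :=
    (hcompI.prod isCompact_univ).uniformContinuousOn_of_continuous hcont.continuousOn
  obtain ⟨ρ, hρ, hρ'⟩ := Metric.uniformContinuousOn_iff.1 huc η hη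
  -- finite ρ-net of I
  obtain ⟨T, hTI, hTfin, hTcov⟩ := hcompI.finite_cover_balls (e := ρ) hρ
  -- the spanning set
  set F : Finset M := hTfin.toFinset.image (fun t => φ t x) with hF
  have hspan : ∀ n : ℕ, r x n η ≤ F.card := by
    intro n
    rw [hr]
    apply Nat.sInf_le
    refine ⟨F, rfl, ?_⟩
    intro y hy
    obtain ⟨s, hs, hsy⟩ := ht₀ hy
    obtain ⟨t, ht, hyt⟩ := Set.mem_iUnion₂.1 (hTcov hs)
    refine ⟨φ t x, Finset.mem_image_of_mem _ (hTfin.mem_toFinset.2 ht), ?_⟩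
    intro i _
    rw [hiter, hiter, ← hsy]
    have h1 : φ (i : ℝ) (φ s x) = φ s (φ (i : ℝ) x) := by
      rw [← hφadd, ← hφadd, add_comm]
    have h2 : φ (i : ℝ) (φ t x) = φ t (φ (i : ℝ) x) := by
      rw [← hφadd, ← hφadd, add_comm]
    rw [h1, h2]
    have := hρ' (s, φ (i : ℝ) x) (by exact ⟨hs, Set.mem_univ _⟩)
      (t, φ (i : ℝ) x) (by exact ⟨hTI ht, Set.mem_univ _⟩)
      (by
        rw [Prod.dist_eq]
        simp only [dist_self]
        rw [max_eq_left dist_nonneg]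
        rw [Metric.mem_ball] at hyt
        exact hyt)
    exact this
  -- bound the log and squeeze
  set C : ℕ := F.card + 1 with hC
  have hrC : ∀ n, (r x n η : ℝ) ≤ (C : ℝ) := by
    intro n
    exact_mod_cast (hspan n).trans (Nat.le_succ _)
  have hC1 : (1:ℝ) ≤ (C:ℝ) := by exact_mod_cast Nat.succ_le_succ (Nat.zero_le _)
  have hlog : ∀ n, Real.log (r x n η) ≤ Real.log C := by
    intro n
    rcases Nat.eq_zero_or_pos (r x n η) with h | h
    · rw [h]; simp
      exact Real.log_nonneg hC1
    · exact Real.log_le_log (by exact_mod_cast h) (hrC n)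
  have hlog0 : ∀ n, 0 ≤ Real.log (r x n η) := fun n => Real.log_natCast_nonneg _
  have htend : Tendsto (fun n : ℕ => Real.log (r x n η) / (n:ℝ)) atTop (nhds 0) := by
    apply tendsto_of_tendsto_of_tendsto_of_le_of_le
      (tendsto_const_nhds (x := (0:ℝ)))
      (tendsto_const_div_atTop_nhds_zero_nat (Real.log C))
    · intro n
      exact div_nonneg (hlog0 n) (Nat.cast_nonneg n)
    · intro n
      rcases Nat.eq_zero_or_pos n with h | h
      · simp [h]
      · exact div_le_div_of_nonneg_right (hlog n) (Nat.cast_nonneg n)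
  rw [htend.limsup_eq]
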